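/- For every A ∈ ℍ^{n×n} and every right eigenvalue q of A, the algebraic multiplicity of q is at least its geometric multiplicity: a.m.(q,A) ≥ g.m.(q,A). Moreover, if A and B are similar quaternion matrices (B = S⁻¹AS for some invertible S), they have the same right eigenvalues with equal algebraic and geometric multiplicities. -/

import Mathlib

open Quaternion Matrix

noncomputable section

/-- The copy of a complex number inside the quaternions (span of 1 and i). -/
def toQ (z : ℂ) : ℍ[ℝ] := ⟨z.re, z.im, 0, 0⟩

/-- First complex component of a quaternion: a = c1 a + (c2 a)·j. -/
def c1 (a : ℍ[ℝ]) : ℂ := ⟨a.re, a.imI⟩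
/-- Second complex component of a quaternion. -/
def c2 (a : ℍ[ℝ]) : ℂ := ⟨a.imJ, a.imK⟩

/-- Similarity of quaternions: p = h⁻¹ q h for some nonzero h. -/
def qSimilar (p q : ℍ[ℝ]) : Prop := ∃ h : ℍ[ℝ], h ≠ 0 ∧ p = h⁻¹ * q * h

/-- q is a right eigenvalue of A. -/
def RightEig {n : ℕ} (A : Matrix (Fin n) (Fin n) ℍ[ℝ]) (q : ℍ[ℝ]) : Prop :=
  ∃ x : Fin n → ℍ[ℝ], x ≠ 0 ∧ A.mulVec x = fun i => x i * q

/-- The complex adjoint matrix of a quaternion matrix. -/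
def fAdj {n : ℕ} (A : Matrix (Fin n) (Fin n) ℍ[ℝ]) :
    Matrix (Fin n ⊕ Fin n) (Fin n ⊕ Fin n) ℂ :=
  Matrix.fromBlocks (A.map c1) (A.map c2)
    (-(A.map (fun a => starRingEnd ℂ (c2 a)))) (A.map (fun a => starRingEnd ℂ (c1 a)))

/-- Algebraic multiplicity of an eigenvalue of a complex matrix. -/
def algMult {m : Type*} [Fintype m] [DecidableEq m] (B : Matrix m m ℂ) (μ : ℂ) : ℕ :=
  (Matrix.charpoly B).rootMultiplicity μ

/-- Geometric multiplicity of an eigenvalue of a complex matrix. -/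
def geoMult {m : Type*} [Fintype m] [DecidableEq m] (B : Matrix m m ℂ) (μ : ℂ) : ℕ :=
  Module.finrank ℂ (LinearMap.ker (Matrix.mulVecLin (B - μ • 1)))

/-- The set of right q-eigenvectors (with 0). -/
def eigSet {n : ℕ} (A : Matrix (Fin n) (Fin n) ℍ[ℝ]) (q : ℍ[ℝ]) : Set (Fin n → ℍ[ℝ]) :=
  {x | A.mulVec x = fun i => x i * q}


/-- The [q]-eigenspace as a right ℍ-subspace of ℍⁿ. -/
def Vclass {n : ℕ} (A : Matrix (Fin n) (Fin n) ℍ[ℝ]) (q : ℍ[ℝ]) :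
    Submodule ℍ[ℝ]ᵐᵒᵖ (Fin n → ℍ[ℝ]) :=
  Submodule.span ℍ[ℝ]ᵐᵒᵖ (⋃ q' ∈ {p | qSimilar p q}, eigSet A q')

/-- geometric multiplicity -/
def gm {n : ℕ} (A : Matrix (Fin n) (Fin n) ℍ[ℝ]) (q : ℍ[ℝ]) : ℕ :=
  Module.finrank ℍ[ℝ]ᵐᵒᵖ (Vclass A q)


variable {n : ℕ}

def jq : ℍ[ℝ] := ⟨0,0,1,0⟩

@[simp] lemma jq_re : jq.re = 0 := rfl
@[simp] lemma jq_imI : jq.imI = 0 := rfl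
@[simp] lemma jq_imJ : jq.imJ = 1 := rfl
@[simp] lemma jq_imK : jq.imK = 0 := rfl

@[simp] lemma toQ_re (z : ℂ) : (toQ z).re = z.re := rfl
@[simp] lemma toQ_imI (z : ℂ) : (toQ z).imI = z.im := rfl
@[simp] lemma toQ_imJ (z : ℂ) : (toQ z).imJ = 0 := rfl
@[simp] lemma toQ_imK (z : ℂ) : (toQ z).imK = 0 := rfl

lemma toQ_inj {z w : ℂ} (h : toQ z = toQ w) : z = w := by
  have h1 := congrArg QuaternionAlgebra.re h
  have h2 := congrArg QuaternionAlgebra.imI h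
  simp at h1 h2; exact Complex.ext h1 h2

lemma toQ_mul (z w : ℂ) : toQ (z * w) = toQ z * toQ w := by
  ext <;> simp [Complex.mul_re, Complex.mul_im, Quaternion.re_mul, Quaternion.imI_mul, Quaternion.imJ_mul, Quaternion.imK_mul] <;> ring

lemma toQ_add (z w : ℂ) : toQ (z + w) = toQ z + toQ w := by
  ext <;> simp

@[simp] lemma toQ_one : toQ 1 = 1 := by ext <;> simp [toQ]
@[simp] lemma toQ_zero : toQ 0 = 0 := by ext <;> simp [toQ]

lemma quat_decomp (x : ℍ[ℝ]) : x = toQ (c1 x) + toQ (c2 x) * jq := by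
  ext <;> simp [c1, c2, Quaternion.re_mul, Quaternion.imI_mul, Quaternion.imJ_mul, Quaternion.imK_mul]

lemma jq_mul_toQ (z : ℂ) : jq * toQ z = toQ (starRingEnd ℂ z) * jq := by
  ext <;> simp [Quaternion.re_mul, Quaternion.imI_mul, Quaternion.imJ_mul, Quaternion.imK_mul]

lemma toQ_mul_jq_mul (z w : ℂ) : (toQ z * jq) * toQ w = (toQ z * toQ (starRingEnd ℂ w)) * jq := by
  rw [mul_assoc, jq_mul_toQ, mul_assoc]

@[simp] lemma jq_mul_jq : jq * jq = -1 := by ext <;> simp [Quaternion.re_mul, Quaternion.imI_mul, Quaternion.imJ_mul, Quaternion.imK_mul]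

lemma c1_mul (a b : ℍ[ℝ]) :
    c1 (a * b) = c1 a * c1 b - c2 a * starRingEnd ℂ (c2 b) := by
  apply Complex.ext <;> simp [c1, c2, Complex.mul_re, Complex.mul_im] <;> ring

lemma c2_mul (a b : ℍ[ℝ]) :
    c2 (a * b) = c1 a * c2 b + c2 a * starRingEnd ℂ (c1 b) := by
  apply Complex.ext <;> simp [c1, c2, Complex.mul_re, Complex.mul_im] <;> ring

lemma c1_add (a b : ℍ[ℝ]) : c1 (a + b) = c1 a + c1 b := by
  apply Complex.ext <;> simp [c1]
lemma c2_add (a b : ℍ[ℝ]) : c2 (a + b) = c2 a + c2 b := by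
  apply Complex.ext <;> simp [c2]
@[simp] lemma c1_zero : c1 0 = 0 := by apply Complex.ext <;> simp [c1]
@[simp] lemma c2_zero : c2 0 = 0 := by apply Complex.ext <;> simp [c2]
@[simp] lemma c1_one : c1 1 = 1 := by apply Complex.ext <;> simp [c1]
@[simp] lemma c2_one : c2 1 = 0 := by apply Complex.ext <;> simp [c2]

@[simp] lemma c1_toQ (z : ℂ) : c1 (toQ z) = z := by apply Complex.ext <;> simp [c1, toQ]
@[simp] lemma c2_toQ (z : ℂ) : c2 (toQ z) = 0 := by apply Complex.ext <;> simp [c2, toQ]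

lemma re_mul_comm (a b : ℍ[ℝ]) : (a * b).re = (b * a).re := by
  simp [Quaternion.re_mul]; ring

/-- commuting with a non-real complex quaternion forces the j,k parts to vanish -/
lemma comm_toQ_imEq {x : ℍ[ℝ]} {z : ℂ} (hz : z.im ≠ 0)
    (h : x * toQ z = toQ z * x) : x.imJ = 0 ∧ x.imK = 0 := by
  have hJ := congrArg QuaternionAlgebra.imJ h
  have hK := congrArg QuaternionAlgebra.imK h
  simp [Quaternion.imJ_mul, Quaternion.imK_mul] at hJ hK
  have e1 : 2 * (z.im * x.imK) = 0 := by linear_combination hJ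
  have e2 : 2 * (z.im * x.imJ) = 0 := by linear_combination -hK
  have k0 : x.imK = 0 := by
    rcases mul_eq_zero.mp (by linarith : z.im * x.imK = 0) with h' | h'
    · exact absurd h' hz
    · exact h'
  have j0 : x.imJ = 0 := by
    rcases mul_eq_zero.mp (by linarith : z.im * x.imJ = 0) with h' | h'
    · exact absurd h' hz
    · exact h'
  exact ⟨j0, k0⟩

/-- similar complex quaternions with nonneg imaginary part are equal -/
lemma similar_complex_eq {μ lq : ℂ} (hμ : 0 ≤ μ.im) (hlq : 0 ≤ lq.im)
    {x : ℍ[ℝ]} (hx : x ≠ 0) (h : toQ μ * x = x * toQ lq) : μ = lq := by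
  have key : toQ μ = x * toQ lq * x⁻¹ := by
    rw [← h, mul_assoc, mul_inv_cancel₀ hx, mul_one]
  have hre : μ.re = lq.re := by
    have h1 : (toQ μ).re = ((x * toQ lq) * x⁻¹).re := by rw [key]
    rw [re_mul_comm (x * toQ lq) x⁻¹, ← mul_assoc, inv_mul_cancel₀ hx, one_mul] at h1
    simpa using h1
  have hnorm : normSq (toQ μ) = normSq (toQ lq) := by
    rw [key, _root_.map_mul, _root_.map_mul, map_inv₀]
    have hns : normSq x ≠ 0 := by simpa using hx
    field_simp
  have him2 : μ.im ^ 2 = lq.im ^ 2 := by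
    simp [Quaternion.normSq_def'] at hnorm
    linear_combination hnorm - (μ.re + lq.re) * hre
  have h3 : (μ.im - lq.im) * (μ.im + lq.im) = 0 := by linear_combination him2
  have : μ.im = lq.im := by
    rcases mul_eq_zero.mp h3 with h' | h' <;> linarith
  exact Complex.ext hre this

lemma qSimilar_trans {p q r : ℍ[ℝ]} (h1 : qSimilar p q) (h2 : qSimilar q r) : qSimilar p r := by
  obtain ⟨h, hh, rfl⟩ := h1
  obtain ⟨k, hk, rfl⟩ := h2
  refine ⟨k * h, mul_ne_zero hk hh, ?_⟩
  rw [_root_.mul_inv_rev]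
  noncomm_ring

lemma qSimilar_symm {p q : ℍ[ℝ]} (h1 : qSimilar p q) : qSimilar q p := by
  obtain ⟨h, hh, rfl⟩ := h1
  refine ⟨h⁻¹, inv_ne_zero hh, ?_⟩
  rw [inv_inv]
  rw [show h * (h⁻¹ * q * h) * h⁻¹ = h * h⁻¹ * q * (h * h⁻¹) by noncomm_ring,
    mul_inv_cancel₀ hh, one_mul, mul_one]

lemma qSimilar_refl (p : ℍ[ℝ]) : qSimilar p p := ⟨1, one_ne_zero, by simp⟩

/-- mulVec commutes with right scalar multiplication -/
lemma mulVec_mul_right (M : Matrix (Fin n) (Fin n) ℍ[ℝ]) (x : Fin n → ℍ[ℝ]) (c : ℍ[ℝ]) :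
    M.mulVec (fun i => x i * c) = fun i => M.mulVec x i * c := by
  funext i
  simp [Matrix.mulVec, dotProduct, Finset.sum_mul, mul_assoc]

lemma smul_def' (c : ℍ[ℝ]ᵐᵒᵖ) (x : Fin n → ℍ[ℝ]) :
    c • x = fun i => x i * c.unop := by
  funext i
  simp [MulOpposite.smul_eq_mul_unop]

/-- the ᵐᵒᵖ-linear equivalence given by multiplication by an invertible matrix -/
def mvEquiv (S S' : Matrix (Fin n) (Fin n) ℍ[ℝ]) (h1 : S * S' = 1) (h2 : S' * S = 1) :
    (Fin n → ℍ[ℝ]) ≃ₗ[ℍ[ℝ]ᵐᵒᵖ] (Fin n → ℍ[ℝ]) where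
  toFun := S'.mulVec
  invFun := S.mulVec
  map_add' x y := Matrix.mulVec_add S' x y
  map_smul' c x := by
    simp only [RingHom.id_apply, smul_def' c]
    rw [mulVec_mul_right]
  left_inv x := by
    show S.mulVec (S'.mulVec x) = x
    rw [Matrix.mulVec_mulVec, h1, Matrix.one_mulVec]
  right_inv x := by
    show S'.mulVec (S.mulVec x) = x
    rw [Matrix.mulVec_mulVec, h2, Matrix.one_mulVec]

lemma mvEquiv_image_eigSet (A B S S' : Matrix (Fin n) (Fin n) ℍ[ℝ])
    (h1 : S * S' = 1) (h2 : S' * S = 1) (hB : B = S' * A * S) (q' : ℍ[ℝ]) :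
    (mvEquiv S S' h1 h2) '' (eigSet A q') = eigSet B q' := by
  apply Set.Subset.antisymm
  · rintro _ ⟨x, hx, rfl⟩
    show B.mulVec (S'.mulVec x) = _
    have hx' : A.mulVec x = fun i => x i * q' := hx
    have e1 : B * S' = S' * A := by
      rw [hB, mul_assoc (S' * A) S S', h1, mul_one]
    rw [Matrix.mulVec_mulVec, e1, ← Matrix.mulVec_mulVec, hx', mulVec_mul_right]
    rfl
  · intro y hy
    refine ⟨S.mulVec y, ?_, ?_⟩
    · show A.mulVec (S.mulVec y) = _
      have hy' : B.mulVec y = fun i => y i * q' := hy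
      have e1 : A * S = S * B := by
        rw [hB, ← mul_assoc, ← mul_assoc, h1, one_mul]
      rw [Matrix.mulVec_mulVec, e1, ← Matrix.mulVec_mulVec, hy', mulVec_mul_right]
    · show S'.mulVec (S.mulVec y) = y
      rw [Matrix.mulVec_mulVec, h2, Matrix.one_mulVec]

lemma Vclass_map (A B S S' : Matrix (Fin n) (Fin n) ℍ[ℝ])
    (h1 : S * S' = 1) (h2 : S' * S = 1) (hB : B = S' * A * S) (q : ℍ[ℝ]) :
    (Vclass A q).map (mvEquiv S S' h1 h2 : (Fin n → ℍ[ℝ]) →ₗ[ℍ[ℝ]ᵐᵒᵖ] (Fin n → ℍ[ℝ]))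
      = Vclass B q := by
  unfold Vclass
  rw [Submodule.map_span]
  congr 1
  rw [Set.image_iUnion₂]
  apply Set.iUnion_congr
  intro q'
  apply Set.iUnion_congr
  intro _
  exact mvEquiv_image_eigSet A B S S' h1 h2 hB q'

lemma gm_eq_of_similar (A B S S' : Matrix (Fin n) (Fin n) ℍ[ℝ])
    (h1 : S * S' = 1) (h2 : S' * S = 1) (hB : B = S' * A * S) (q : ℍ[ℝ]) :
    gm A q = gm B q := by
  unfold gm
  rw [← Vclass_map A B S S' h1 h2 hB q, LinearEquiv.finrank_map_eq]

lemma rightEig_of_similar (A B S S' : Matrix (Fin n) (Fin n) ℍ[ℝ])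
    (h1 : S * S' = 1) (h2 : S' * S = 1) (hB : B = S' * A * S) (p : ℍ[ℝ])
    (h : RightEig A p) : RightEig B p := by
  obtain ⟨x, hx, hx2⟩ := h
  refine ⟨S'.mulVec x, ?_, ?_⟩
  · intro h0
    apply hx
    have : S.mulVec (S'.mulVec x) = S.mulVec 0 := by rw [h0]
    rwa [Matrix.mulVec_mulVec, h1, Matrix.one_mulVec, Matrix.mulVec_zero] at this
  · have := mvEquiv_image_eigSet A B S S' h1 h2 hB p
    have hmem : x ∈ eigSet A p := hx2
    have : S'.mulVec x ∈ eigSet B p := by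
      rw [← this]; exact ⟨x, hmem, rfl⟩
    exact this

/-- quaternion multiplication identity for the E2 closure -/
lemma quat_mul_decomp (u v : ℍ[ℝ]) (a b : ℂ) :
    (u + v * jq) * (toQ a + toQ b * jq) =
      (u * toQ a - v * toQ (starRingEnd ℂ b)) +
        (u * toQ b + v * toQ (starRingEnd ℂ a)) * jq := by
  ext <;>
    simp [Quaternion.re_mul, Quaternion.imI_mul, Quaternion.imJ_mul, Quaternion.imK_mul] <;> ring

lemma eig_add {T : Matrix (Fin n) (Fin n) ℍ[ℝ]} {p : ℍ[ℝ]} {x y : Fin n → ℍ[ℝ]}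
    (hx : x ∈ eigSet T p) (hy : y ∈ eigSet T p) : x + y ∈ eigSet T p := by
  have hx' : T.mulVec x = fun i => x i * p := hx
  have hy' : T.mulVec y = fun i => y i * p := hy
  show T.mulVec (x + y) = _
  rw [Matrix.mulVec_add, hx', hy']
  funext i
  simp [add_mul]

lemma eig_zero {T : Matrix (Fin n) (Fin n) ℍ[ℝ]} {p : ℍ[ℝ]} : (0 : Fin n → ℍ[ℝ]) ∈ eigSet T p := by
  show T.mulVec 0 = _
  rw [Matrix.mulVec_zero]
  funext i
  simp

lemma eig_mul_complex {T : Matrix (Fin n) (Fin n) ℍ[ℝ]} {lq : ℂ} {x : Fin n → ℍ[ℝ]}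
    (hx : x ∈ eigSet T (toQ lq)) (z : ℂ) : (fun i => x i * toQ z) ∈ eigSet T (toQ lq) := by
  have hx' : T.mulVec x = fun i => x i * toQ lq := hx
  show T.mulVec _ = _
  rw [mulVec_mul_right, hx']
  funext i
  rw [mul_assoc, mul_assoc, ← toQ_mul, ← toQ_mul, mul_comm lq z]

/-- E₀ + E₀·j as a submodule -/
def E2 (T : Matrix (Fin n) (Fin n) ℍ[ℝ]) (lq : ℂ) : Submodule ℍ[ℝ]ᵐᵒᵖ (Fin n → ℍ[ℝ]) where
  carrier := {v | ∃ y z, y ∈ eigSet T (toQ lq) ∧ z ∈ eigSet T (toQ lq) ∧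
    v = fun i => y i + z i * jq}
  add_mem' := by
    rintro v w ⟨y1, z1, hy1, hz1, rfl⟩ ⟨y2, z2, hy2, hz2, rfl⟩
    refine ⟨y1 + y2, z1 + z2, eig_add hy1 hy2, eig_add hz1 hz2, ?_⟩
    funext i
    simp only [Pi.add_apply, add_mul]
    abel
  zero_mem' := ⟨0, 0, eig_zero, eig_zero, by funext i; simp⟩
  smul_mem' := by
    rintro c v ⟨y, z, hy, hz, rfl⟩
    set a := c1 c.unop
    set b := c2 c.unop
    refine ⟨(fun i => y i * toQ a) + (fun i => z i * (-(toQ (starRingEnd ℂ b)))),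
      (fun i => y i * toQ b) + (fun i => z i * toQ (starRingEnd ℂ a)), ?_, ?_, ?_⟩
    · have h2 : (fun i => z i * (-(toQ (starRingEnd ℂ b)))) ∈ eigSet T (toQ lq) := by
        have h3 := eig_mul_complex hz (-(starRingEnd ℂ b))
        have h4 : toQ (-(starRingEnd ℂ b)) = -(toQ (starRingEnd ℂ b)) := by
          ext <;> simp
        rw [h4] at h3
        exact h3
      exact eig_add (eig_mul_complex hy a) h2
    · exact eig_add (eig_mul_complex hy b) (eig_mul_complex hz (starRingEnd ℂ a))
    · rw [smul_def']
      funext i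
      have hc : c.unop = toQ a + toQ b * jq := quat_decomp c.unop
      rw [Pi.add_apply, Pi.add_apply, hc, quat_mul_decomp]
      simp [mul_neg, sub_eq_add_neg]

lemma toQ_neg (z : ℂ) : toQ (-z) = -toQ z := by ext <;> simp

lemma eigSet_shift {T : Matrix (Fin n) (Fin n) ℍ[ℝ]} {q' : ℍ[ℝ]} {g : ℍ[ℝ]} (hg : g ≠ 0)
    (hq' : q' = g⁻¹ * toQ lq * g) {x : Fin n → ℍ[ℝ]} (hx : x ∈ eigSet T q') :
    (fun i => x i * g⁻¹) ∈ eigSet T (toQ lq) := by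
  have hx' : T.mulVec x = fun i => x i * q' := hx
  show T.mulVec _ = _
  rw [mulVec_mul_right, hx']
  funext i
  show x i * q' * g⁻¹ = x i * g⁻¹ * toQ lq
  rw [hq', show x i * (g⁻¹ * toQ lq * g) * g⁻¹ = x i * g⁻¹ * toQ lq * (g * g⁻¹) by noncomm_ring,
    mul_inv_cancel₀ hg, mul_one]

lemma Vclass_le_E2 (T : Matrix (Fin n) (Fin n) ℍ[ℝ]) (q : ℍ[ℝ]) (lq : ℂ)
    (hsim : qSimilar q (toQ lq)) : Vclass T q ≤ E2 T lq := by
  apply Submodule.span_le.mpr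
  rintro x hx
  simp only [Set.mem_iUnion] at hx
  obtain ⟨q', hq', hx⟩ := hx
  have hsim' : qSimilar q' (toQ lq) := qSimilar_trans hq' hsim
  obtain ⟨g, hg, hq'2⟩ := hsim'
  have h1 : (fun i => x i * g⁻¹) ∈ eigSet T (toQ lq) := eigSet_shift hg hq'2 hx
  have h2 : (fun i => x i * g⁻¹) ∈ E2 T lq :=
    ⟨_, 0, h1, eig_zero, by funext i; simp⟩
  have h3 := (E2 T lq).smul_mem (MulOpposite.op g) h2
  have : (MulOpposite.op g) • (fun i => x i * g⁻¹) = x := by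
    rw [smul_def']
    funext i
    simp [mul_assoc, inv_mul_cancel₀ hg]
  rwa [this] at h3

/-- diagonal entry relation for a triangular matrix at the top nonzero index -/
lemma eig_entry {T : Matrix (Fin n) (Fin n) ℍ[ℝ]} (htri : ∀ i j : Fin n, j < i → T i j = 0)
    {p : ℍ[ℝ]} {x : Fin n → ℍ[ℝ]} (hx : x ∈ eigSet T p) (i : Fin n)
    (htop : ∀ j, i < j → x j = 0) : T i i * x i = x i * p := by
  have hx' : T.mulVec x = fun i => x i * p := hx
  have h1 : T.mulVec x i = x i * p := by rw [hx']
  rw [Matrix.mulVec, dotProduct] at h1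
  rw [← h1]
  symm
  apply Finset.sum_eq_single
  · intro j _ hj
    rcases lt_or_gt_of_ne hj with h | h
    · rw [htri i j h, zero_mul]
    · rw [htop j h, mul_zero]
  · intro h
    exact absurd (Finset.mem_univ i) h

/-- a `λ`-eigenvector of a triangular matrix vanishing on the diagonal-λ indices is zero -/
lemma eig_vanish {T : Matrix (Fin n) (Fin n) ℍ[ℝ]} {lq : ℂ} (him : 0 ≤ lq.im)
    (htri : ∀ i j : Fin n, j < i → T i j = 0)
    (hdiag : ∀ i : Fin n, ∃ μ : ℂ, 0 ≤ μ.im ∧ T i i = toQ μ)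
    {x : Fin n → ℍ[ℝ]} (hx : x ∈ eigSet T (toQ lq))
    (hS : ∀ i : Fin n, T i i = toQ lq → x i = 0) : x = 0 := by
  have key : ∀ m : ℕ, ∀ i : Fin n, n - i.val ≤ m → x i = 0 := by
    intro m
    induction m with
    | zero => intro i h; exact absurd h (by have := i.isLt; omega)
    | succ m ih =>
      intro i h
      have htop : ∀ j, i < j → x j = 0 := by
        intro j hj
        exact ih j (by have := j.isLt; have : i.val < j.val := hj; omega)
      have he := eig_entry htri hx i htop
      by_cases h0 : x i = 0
      · exact h0
      · obtain ⟨μ, hμ, hTii⟩ := hdiag i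
        rw [hTii] at he
        have : μ = lq := similar_complex_eq hμ him h0 he
        exact hS i (by rw [hTii, this])
  funext i
  exact key n i (by omega)

lemma complex_part_zero {u v : ℍ[ℝ]} (hu1 : u.imJ = 0) (hu2 : u.imK = 0)
    (hv1 : v.imJ = 0) (hv2 : v.imK = 0) (h : u + v * jq = 0) : u = 0 ∧ v = 0 := by
  have h1 := congrArg QuaternionAlgebra.re h
  have h2 := congrArg QuaternionAlgebra.imI h
  have h3 := congrArg QuaternionAlgebra.imJ h
  have h4 := congrArg QuaternionAlgebra.imK h
  simp [Quaternion.re_mul, Quaternion.imI_mul, Quaternion.imJ_mul, Quaternion.imK_mul,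
    hu1, hu2, hv1, hv2] at h1 h2 h3 h4
  constructor <;> ext <;> simp [hu1, hu2, hv1, hv2, h1, h2, h3, h4]

/-- the key vanishing lemma for pairs, when lq has positive imaginary part -/
lemma pair_vanish {T : Matrix (Fin n) (Fin n) ℍ[ℝ]} {lq : ℂ} (him : 0 < lq.im)
    (htri : ∀ i j : Fin n, j < i → T i j = 0)
    (hdiag : ∀ i : Fin n, ∃ μ : ℂ, 0 ≤ μ.im ∧ T i i = toQ μ)
    {y z : Fin n → ℍ[ℝ]} (hy : y ∈ eigSet T (toQ lq)) (hz : z ∈ eigSet T (toQ lq))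
    (hS : ∀ i : Fin n, T i i = toQ lq → y i + z i * jq = 0) : y = 0 ∧ z = 0 := by
  have key : ∀ m : ℕ, ∀ i : Fin n, n - i.val ≤ m → y i = 0 ∧ z i = 0 := by
    intro m
    induction m with
    | zero => intro i h; exact absurd h (by have := i.isLt; omega)
    | succ m ih =>
      intro i h
      have htopy : ∀ j, i < j → y j = 0 := by
        intro j hj
        exact (ih j (by have := j.isLt; have : i.val < j.val := hj; omega)).1
      have htopz : ∀ j, i < j → z j = 0 := by
        intro j hj
        exact (ih j (by have := j.isLt; have : i.val < j.val := hj; omega)).2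
      have hey := eig_entry htri hy i htopy
      have hez := eig_entry htri hz i htopz
      by_cases h0 : y i = 0 ∧ z i = 0
      · exact h0
      · obtain ⟨μ, hμ, hTii⟩ := hdiag i
        rw [hTii] at hey hez
        have hμlq : μ = lq := by
          rcases not_and_or.mp h0 with h' | h'
          · exact similar_complex_eq hμ (le_of_lt him) h' hey
          · exact similar_complex_eq hμ (le_of_lt him) h' hez
        subst hμlq
        have hSc := hS i hTii
        have hyc : y i * toQ μ = toQ μ * y i := hey.symm
        have hzc : z i * toQ μ = toQ μ * z i := hez.symm
        have hy2 := comm_toQ_imEq (ne_of_gt him) hyc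
        have hz2 := comm_toQ_imEq (ne_of_gt him) hzc
        exact complex_part_zero hy2.1 hy2.2 hz2.1 hz2.2 hSc
  constructor <;> funext i
  · exact (key n i (by omega)).1
  · exact (key n i (by omega)).2

/-- for real lq, toQ lq is central -/
lemma toQ_real_comm {lq : ℂ} (h : lq.im = 0) (x : ℍ[ℝ]) : x * toQ lq = toQ lq * x := by
  ext <;> simp [Quaternion.re_mul, Quaternion.imI_mul, Quaternion.imJ_mul, Quaternion.imK_mul,
    h] <;> ring

/-- the main vanishing property for Vclass members -/
lemma Vclass_vanish (T : Matrix (Fin n) (Fin n) ℍ[ℝ]) (q : ℍ[ℝ]) (lq : ℂ) (him : 0 ≤ lq.im)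
    (hsim : qSimilar q (toQ lq))
    (htri : ∀ i j : Fin n, j < i → T i j = 0)
    (hdiag : ∀ i : Fin n, ∃ μ : ℂ, 0 ≤ μ.im ∧ T i i = toQ μ)
    {v : Fin n → ℍ[ℝ]} (hv : v ∈ Vclass T q)
    (hS : ∀ i : Fin n, T i i = toQ lq → v i = 0) : v = 0 := by
  obtain ⟨y, z, hy, hz, rfl⟩ := Vclass_le_E2 T q lq hsim hv
  rcases eq_or_lt_of_le him with heq | hlt
  · -- lq real : the whole vector is an eigenvector
    have hzj : (fun i => z i * jq) ∈ eigSet T (toQ lq) := by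
      have hz' : T.mulVec z = fun i => z i * toQ lq := hz
      show T.mulVec _ = _
      rw [mulVec_mul_right, hz']
      funext i
      show z i * toQ lq * jq = z i * jq * toQ lq
      rw [mul_assoc, ← toQ_real_comm heq.symm jq, ← mul_assoc]
    have hv : (fun i => y i + z i * jq) ∈ eigSet T (toQ lq) := by
      have := eig_add hy hzj
      exact this
    exact eig_vanish him htri hdiag hv hS
  · have := pair_vanish hlt htri hdiag hy hz hS
    rw [this.1, this.2]
    funext i
    simp

lemma gm_le_count (T : Matrix (Fin n) (Fin n) ℍ[ℝ]) (q : ℍ[ℝ]) (lq : ℂ) (him : 0 ≤ lq.im)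
    (hsim : qSimilar q (toQ lq))
    (htri : ∀ i j : Fin n, j < i → T i j = 0)
    (hdiag : ∀ i : Fin n, ∃ μ : ℂ, 0 ≤ μ.im ∧ T i i = toQ μ) :
    gm T q ≤ Set.ncard {i : Fin n | T i i = toQ lq} := by
  classical
  let π : (Fin n → ℍ[ℝ]) →ₗ[ℍ[ℝ]ᵐᵒᵖ] ({i : Fin n // T i i = toQ lq} → ℍ[ℝ]ᵐᵒᵖ) :=
    { toFun := fun v => fun i => MulOpposite.op (v i.1)
      map_add' := by intro u v; funext i; simp
      map_smul' := by
        intro c v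
        funext i
        rw [smul_def']
        simp }
  let f := π.domRestrict (Vclass T q)
  have hker : LinearMap.ker f = ⊥ := by
    rw [LinearMap.ker_eq_bot']
    rintro ⟨v, hv⟩ h0
    have h0' : π v = 0 := h0
    have hvan : ∀ i : Fin n, T i i = toQ lq → v i = 0 := by
      intro i hi
      have h1 := congrFun h0' ⟨i, hi⟩
      have h2 : MulOpposite.op (v i) = 0 := h1
      simpa using h2
    have : v = 0 := Vclass_vanish T q lq him hsim htri hdiag hv hvan
    exact Subtype.ext this
  have hle := LinearMap.finrank_le_finrank_of_injective (LinearMap.ker_eq_bot.mp hker)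
  rw [Module.finrank_fintype_fun_eq_card] at hle
  unfold gm
  refine le_trans hle ?_
  rw [← Nat.card_coe_set_eq, Nat.card_eq_fintype_card]
  apply le_of_eq
  congr 1

def c1h : ℍ[ℝ] →+ ℂ := { toFun := c1, map_zero' := c1_zero, map_add' := c1_add }
def c2h : ℍ[ℝ] →+ ℂ := { toFun := c2, map_zero' := c2_zero, map_add' := c2_add }

lemma c1_sum {ι : Type*} (s : Finset ι) (f : ι → ℍ[ℝ]) :
    c1 (∑ k ∈ s, f k) = ∑ k ∈ s, c1 (f k) := map_sum c1h f s
lemma c2_sum {ι : Type*} (s : Finset ι) (f : ι → ℍ[ℝ]) :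
    c2 (∑ k ∈ s, f k) = ∑ k ∈ s, c2 (f k) := map_sum c2h f s

lemma fAdj_one : fAdj (1 : Matrix (Fin n) (Fin n) ℍ[ℝ]) = 1 := by
  ext i j
  rcases i with i | i <;> rcases j with j | j <;>
    simp [fAdj, Matrix.map_apply, Matrix.one_apply, apply_ite c1, apply_ite c2,
      apply_ite (starRingEnd ℂ), Matrix.fromBlocks]

lemma fAdj_mul (M N : Matrix (Fin n) (Fin n) ℍ[ℝ]) : fAdj (M * N) = fAdj M * fAdj N := by
  ext i j
  rcases i with i | i <;> rcases j with j | j <;>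
    · simp only [fAdj, Matrix.mul_apply, Matrix.fromBlocks_apply₁₁, Matrix.fromBlocks_apply₁₂,
        Matrix.fromBlocks_apply₂₁, Matrix.fromBlocks_apply₂₂, Matrix.map_apply,
        Matrix.neg_apply, Fintype.sum_sum_type, c1_sum, c2_sum, c1_mul, c2_mul, map_add,
        map_sum, _root_.map_mul, map_sub, RingHomCompTriple.comp_apply, Complex.conj_conj,
        neg_neg, mul_neg, neg_mul, RingHom.id_apply]
      simp only [← Finset.sum_neg_distrib, ← Finset.sum_add_distrib]
      try exact Finset.sum_congr rfl fun k _ => by ring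

open Polynomial in
lemma charpoly_similar {m : Type*} [Fintype m] [DecidableEq m] (M P Q : Matrix m m ℂ)
    (h1 : P * Q = 1) (h2 : Q * P = 1) : (Q * M * P).charpoly = M.charpoly := by
  have hs : Matrix.scalar m (X : ℂ[X]) = (X : ℂ[X]) • (1 : Matrix m m ℂ[X]) := by
    ext i j
    simp [Matrix.scalar_apply, Matrix.one_apply, Matrix.diagonal_apply, apply_ite]
  have key : Matrix.charmatrix (Q * M * P) = (Q.map C) * Matrix.charmatrix M * (P.map C) := by
    unfold Matrix.charmatrix
    rw [mul_sub, sub_mul, hs]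
    congr 1
    · rw [Matrix.mul_smul, Matrix.mul_one, Matrix.smul_mul, ← Matrix.map_mul, h2]
      congr 1
      ext i j
      simp [Matrix.map_apply, Matrix.one_apply, apply_ite]
    · simp only [RingHom.mapMatrix_apply]
      rw [← Matrix.map_mul, ← Matrix.map_mul]
  unfold Matrix.charpoly
  rw [key, Matrix.det_mul, Matrix.det_mul]
  have hd : (Q.map C).det * (P.map C).det = 1 := by
    rw [← Matrix.det_mul, ← Matrix.map_mul, h2]
    have : (1 : Matrix m m ℂ).map C = 1 := by
      ext i j
      simp [Matrix.map_apply, Matrix.one_apply, apply_ite]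
    rw [this, Matrix.det_one]
  calc (Q.map C).det * (Matrix.charmatrix M).det * (P.map C).det
      = (Matrix.charmatrix M).det * ((Q.map C).det * (P.map C).det) := by ring
    _ = (Matrix.charmatrix M).det := by rw [hd, mul_one]

def pairEquiv (a : Fin n) : Fin 2 ≃ {x : Fin n ⊕ Fin n // Sum.elim id id x = a} where
  toFun k := if k = 0 then ⟨Sum.inl a, rfl⟩ else ⟨Sum.inr a, rfl⟩
  invFun x := match x.1 with
    | Sum.inl _ => 0
    | Sum.inr _ => 1
  left_inv k := by fin_cases k <;> simp
  right_inv x := by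
    rcases x with ⟨x | x, hx⟩ <;> simp only [Sum.elim_inl, Sum.elim_inr, id] at hx <;>
      subst hx <;> simp

open Polynomial in
lemma charpoly_fAdj_triangular (T : Matrix (Fin n) (Fin n) ℍ[ℝ])
    (htri : ∀ i j : Fin n, j < i → T i j = 0)
    (d : Fin n → ℂ) (hd : ∀ i, T i i = toQ (d i)) :
    (fAdj T).charpoly = ∏ i : Fin n, ((X - C (d i)) * (X - C (starRingEnd ℂ (d i)))) := by
  classical
  have hz : ∀ (x y : Fin n), y < x → fAdj T (Sum.inl x) (Sum.inl y) = 0 ∧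
      fAdj T (Sum.inl x) (Sum.inr y) = 0 ∧ fAdj T (Sum.inr x) (Sum.inl y) = 0 ∧
      fAdj T (Sum.inr x) (Sum.inr y) = 0 := by
    intro x y hxy
    simp [fAdj, Matrix.fromBlocks, Matrix.map_apply, htri x y hxy]
  have hbt : (Matrix.charmatrix (fAdj T)).BlockTriangular (Sum.elim id id) := by
    intro x y hxy
    rcases x with x | x <;> rcases y with y | y <;>
      simp only [Sum.elim_inl, Sum.elim_inr, id] at hxy <;>
      rw [Matrix.charmatrix_apply_ne _ _ _ (by first | (simp; omega) | simp)] <;>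
      simp [(hz x y hxy).1, (hz x y hxy).2.1, (hz x y hxy).2.2.1, (hz x y hxy).2.2.2]
  rw [Matrix.charpoly, hbt.det]
  have himg : (Finset.univ.image (Sum.elim id id : Fin n ⊕ Fin n → Fin n)) = Finset.univ := by
    apply Finset.eq_univ_of_forall
    intro a
    exact Finset.mem_image.mpr ⟨Sum.inl a, Finset.mem_univ _, rfl⟩
  rw [himg]
  apply Finset.prod_congr rfl
  intro a _
  have hsub := Matrix.det_submatrix_equiv_self (pairEquiv a)
    ((Matrix.charmatrix (fAdj T)).toSquareBlock (Sum.elim id id) a)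
  rw [← hsub, Matrix.det_fin_two]
  have e00 : (pairEquiv a) 0 = ⟨Sum.inl a, rfl⟩ := rfl
  have e11 : (pairEquiv a) 1 = ⟨Sum.inr a, rfl⟩ := rfl
  simp only [Matrix.submatrix_apply, e00, e11, Matrix.toSquareBlock_def, Matrix.of_apply]
  have h00 : Matrix.charmatrix (fAdj T) (Sum.inl a) (Sum.inl a) = X - C (d a) := by
    rw [Matrix.charmatrix_apply_eq]
    simp [fAdj, Matrix.fromBlocks, Matrix.map_apply, hd a]
  have h11 : Matrix.charmatrix (fAdj T) (Sum.inr a) (Sum.inr a) = X - C (starRingEnd ℂ (d a)) := by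
    rw [Matrix.charmatrix_apply_eq]
    simp [fAdj, Matrix.fromBlocks, Matrix.map_apply, hd a]
  have h01 : Matrix.charmatrix (fAdj T) (Sum.inl a) (Sum.inr a) = 0 := by
    rw [Matrix.charmatrix_apply_ne _ _ _ (by simp)]
    simp [fAdj, Matrix.fromBlocks, Matrix.map_apply, hd a]
  have h10 : Matrix.charmatrix (fAdj T) (Sum.inr a) (Sum.inl a) = 0 := by
    rw [Matrix.charmatrix_apply_ne _ _ _ (by simp)]
    simp [fAdj, Matrix.fromBlocks, Matrix.map_apply, hd a]
  rw [h00, h11, h01, h10]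
  ring

open Polynomial in
lemma count_roots_eq (T : Matrix (Fin n) (Fin n) ℍ[ℝ])
    (htri : ∀ i j : Fin n, j < i → T i j = 0)
    (hdiag : ∀ i : Fin n, ∃ μ : ℂ, 0 ≤ μ.im ∧ T i i = toQ μ)
    (lq : ℂ) (him : 0 ≤ lq.im) :
    (if lq.im = 0 then 2 else 1) * Set.ncard {i : Fin n | T i i = toQ lq}
      = Multiset.count lq (fAdj T).charpoly.roots := by
  classical
  set d : Fin n → ℂ := fun i => Classical.choose (hdiag i) with hd_def
  have hdim : ∀ i, 0 ≤ (d i).im := fun i => (Classical.choose_spec (hdiag i)).1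
  have hdT : ∀ i, T i i = toQ (d i) := fun i => (Classical.choose_spec (hdiag i)).2
  rw [charpoly_fAdj_triangular T htri d hdT]
  have hne : ∀ i : Fin n, (X - C (d i)) * (X - C (starRingEnd ℂ (d i))) ≠ (0 : ℂ[X]) :=
    fun i => mul_ne_zero (X_sub_C_ne_zero _) (X_sub_C_ne_zero _)
  rw [Polynomial.roots_prod _ _ (Finset.prod_ne_zero_iff.mpr (fun i _ => hne i)),
    Multiset.count_bind]
  have hsum : (Finset.univ.val.map fun b =>
      Multiset.count lq ((X - C (d b)) * (X - C (starRingEnd ℂ (d b)))).roots).sum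
      = ∑ i : Fin n, Multiset.count lq ((X - C (d i)) * (X - C (starRingEnd ℂ (d i)))).roots :=
    rfl
  rw [hsum]
  have hroots : ∀ i : Fin n, Multiset.count lq
      ((X - C (d i)) * (X - C (starRingEnd ℂ (d i)))).roots
      = (if d i = lq then 1 else 0) + (if starRingEnd ℂ (d i) = lq then 1 else 0) := by
    intro i
    rw [Polynomial.roots_mul (hne i), Polynomial.roots_X_sub_C, Polynomial.roots_X_sub_C,
      Multiset.count_add, Multiset.count_singleton, Multiset.count_singleton]
    congr 1 <;> simp [eq_comm]
  simp only [hroots]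
  have hncard : Set.ncard {i : Fin n | T i i = toQ lq}
      = ∑ i : Fin n, (if d i = lq then 1 else 0) := by
    have heq : {i : Fin n | T i i = toQ lq} = {i : Fin n | d i = lq} := by
      ext i
      simp only [Set.mem_setOf_eq, hdT i]
      constructor
      · exact fun h => toQ_inj h
      · exact fun h => by rw [h]
    rw [heq, ← Nat.card_coe_set_eq, Nat.card_eq_fintype_card, Fintype.card_subtype,
      Finset.card_filter]
    simp
  rw [hncard, Finset.sum_add_distrib, Finset.mul_sum]
  by_cases h0 : lq.im = 0
  · simp only [h0, if_true]
    rw [← Finset.sum_add_distrib]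
    apply Finset.sum_congr rfl
    intro i _
    by_cases hi : d i = lq
    · have hc2 : starRingEnd ℂ (d i) = lq := by
        rw [hi]
        exact Complex.ext rfl (by simp [h0])
      rw [if_pos hi, if_pos hc2]
      norm_num
    · have hc2 : ¬ (starRingEnd ℂ (d i) = lq) := by
        intro hc
        apply hi
        have hcc := congrArg (starRingEnd ℂ) hc
        rw [Complex.conj_conj] at hcc
        rw [hcc]
        exact Complex.ext rfl (by simp [h0])
      rw [if_neg hi, if_neg hc2]
      norm_num
  · simp only [h0, if_false, one_mul]
    have h2 : ∀ i : Fin n, (if starRingEnd ℂ (d i) = lq then 1 else 0) = (0 : ℕ) := by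
      intro i
      have hc2 : ¬ (starRingEnd ℂ (d i) = lq) := by
        intro hc
        have him' := congrArg Complex.im hc
        simp only [Complex.conj_im] at him'
        have h3 := hdim i
        have h4 : 0 < lq.im := lt_of_le_of_ne him (Ne.symm h0)
        linarith
      simp [hc2]
    simp only [h2, Finset.sum_const, smul_eq_mul, mul_zero, add_zero]

lemma charpoly_fAdj_conj (A T P P' : Matrix (Fin n) (Fin n) ℍ[ℝ])
    (h1 : P * P' = 1) (h2 : P' * P = 1) (hT : T = P' * A * P) :
    (fAdj T).charpoly = (fAdj A).charpoly := by
  rw [hT, fAdj_mul, fAdj_mul]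
  exact charpoly_similar (fAdj A) (fAdj P) (fAdj P')
    (by rw [← fAdj_mul, h1, fAdj_one]) (by rw [← fAdj_mul, h2, fAdj_one])

/-- a.m.(q,A) ≥ g.m.(q,A); moreover similar quaternion matrices have the same right
eigenvalues with equal algebraic and geometric multiplicities. -/
theorem am_ge_gm_and_similarity_invariance {n : ℕ}
    (A : Matrix (Fin n) (Fin n) ℍ[ℝ]) (q : ℍ[ℝ]) (hq : RightEig A q)
    (lq : ℂ) (him : 0 ≤ lq.im) (hsim : qSimilar q (toQ lq)) :
    (∀ U T : Matrix (Fin n) (Fin n) ℍ[ℝ],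
      Uᴴ * U = 1 → U * Uᴴ = 1 → T = Uᴴ * A * U →
      (∀ i j : Fin n, j < i → T i j = 0) →
      (∀ i : Fin n, ∃ μ : ℂ, 0 ≤ μ.im ∧ T i i = toQ μ) →
      Set.ncard {i : Fin n | T i i = toQ lq} ≥ gm A q) ∧
    (∀ B S S' : Matrix (Fin n) (Fin n) ℍ[ℝ], S * S' = 1 → S' * S = 1 →
      B = S' * A * S →
      (∀ p : ℍ[ℝ], RightEig A p ↔ RightEig B p) ∧
      gm A q = gm B q ∧
      (∀ T T' U U' : Matrix (Fin n) (Fin n) ℍ[ℝ],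
        Uᴴ * U = 1 → U * Uᴴ = 1 → T = Uᴴ * A * U →
        (∀ i j : Fin n, j < i → T i j = 0) →
        (∀ i : Fin n, ∃ μ : ℂ, 0 ≤ μ.im ∧ T i i = toQ μ) →
        U'ᴴ * U' = 1 → U' * U'ᴴ = 1 → T' = U'ᴴ * B * U' →
        (∀ i j : Fin n, j < i → T' i j = 0) →
        (∀ i : Fin n, ∃ μ : ℂ, 0 ≤ μ.im ∧ T' i i = toQ μ) →
        Set.ncard {i : Fin n | T i i = toQ lq} =
          Set.ncard {i : Fin n | T' i i = toQ lq})) := by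
  constructor
  · intro U T hU1 hU2 hT htri hdiag
    have hgm : gm A q = gm T q := gm_eq_of_similar A T U Uᴴ hU2 hU1 hT q
    rw [ge_iff_le, hgm]
    exact gm_le_count T q lq him hsim htri hdiag
  · intro B S S' hSS' hS'S hB
    refine ⟨?_, gm_eq_of_similar A B S S' hSS' hS'S hB q, ?_⟩
    · intro p
      constructor
      · exact rightEig_of_similar A B S S' hSS' hS'S hB p
      · intro h
        refine rightEig_of_similar B A S' S hS'S hSS' ?_ p h
        rw [hB, show S * (S' * A * S) * S' = (S * S') * A * (S * S') from by noncomm_ring,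
          hSS', one_mul, mul_one]
    · intro T T' U U' hU1 hU2 hT htri hdiag hU'1 hU'2 hT' htri' hdiag'
      have hc1 := charpoly_fAdj_conj A T U Uᴴ hU2 hU1 hT
      have hT'A : T' = (U'ᴴ * S') * A * (S * U') := by
        rw [hT', hB]
        noncomm_ring
      have hp1 : (S * U') * (U'ᴴ * S') = 1 := by
        rw [show (S * U') * (U'ᴴ * S') = S * (U' * U'ᴴ) * S' from by noncomm_ring, hU'2,
          mul_one, hSS']
      have hp2 : (U'ᴴ * S') * (S * U') = 1 := by
        rw [show (U'ᴴ * S') * (S * U') = U'ᴴ * (S' * S) * U' from by noncomm_ring, hS'S,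
          mul_one, hU'1]
      have hc2 := charpoly_fAdj_conj A T' (S * U') (U'ᴴ * S') hp1 hp2 hT'A
      have e1 := count_roots_eq T htri hdiag lq him
      have e2 := count_roots_eq T' htri' hdiag' lq him
      rw [hc1] at e1
      rw [hc2] at e2
      have hkey := e1.trans e2.symm
      by_cases h0 : lq.im = 0
      · simp only [h0, if_true] at hkey
        omega
      · simp only [h0, if_false] at hkey
        simpa using hkey
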